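/- arXiv:1301.2551 — 3 statements merged into one kernel-verified Lean document; each statement's English description precedes it below -/
import Mathlib

section
/- If η is irrational with finite irrationality measure ν, then there exists a constant C > 0 and K ∈ ℕ such that for all integers k with |k| ≥ K, 1/|e^{2πikη} - 1| ≤ C·|k|^{ν+1}. -/
open Real

lemma aux_abs_exp_sub_one (θ : ℝ) :
    ‖Complex.exp ((θ : ℂ) * Complex.I) - 1‖ = 2 * |Real.sin (θ / 2)| := by
  rw [Complex.exp_mul_I, Real.abs_sin_half, Complex.norm_def, Complex.normSq_apply]
  simp only [Complex.add_re, Complex.add_im, Complex.mul_re, Complex.mul_im, Complex.sub_re,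
    Complex.sub_im, Complex.one_re, Complex.one_im, Complex.I_re, Complex.I_im,
    Complex.cos_ofReal_re, Complex.sin_ofReal_re, Complex.cos_ofReal_im, Complex.sin_ofReal_im]
  have h2 : (Real.cos θ + (Real.sin θ * 0 - 0 * 1) - 1) * (Real.cos θ + (Real.sin θ * 0 - 0 * 1) - 1)
      + (0 + (Real.sin θ * 1 + 0 * 0) - 0) * (0 + (Real.sin θ * 1 + 0 * 0) - 0)
      = 4 * ((1 - Real.cos θ) / 2) := by
    nlinarith [Real.sin_sq_add_cos_sq θ]
  rw [h2, show (4 : ℝ) = 2 ^ 2 by norm_num, Real.sqrt_mul (by positivity),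
    Real.sqrt_sq (by norm_num)]

lemma aux_sin_lb {x : ℝ} (hx : |x| ≤ 1 / 2) : 2 * |x| ≤ |Real.sin (π * x)| := by
  have h1 : |Real.sin (π * x)| = Real.sin (π * |x|) := by
    rcases abs_cases x with ⟨h, _⟩ | ⟨h, hneg⟩
    · rw [h, abs_of_nonneg]
      apply Real.sin_nonneg_of_nonneg_of_le_pi
      · positivity
      · nlinarith [Real.pi_pos, hx, abs_nonneg x, h ▸ hx]
    · rw [h, show π * -x = -(π * x) by ring, Real.sin_neg, abs_of_nonpos]
      have h0 : (0 : ℝ) ≤ Real.sin (-(π * x)) := by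
        apply Real.sin_nonneg_of_nonneg_of_le_pi
        · nlinarith [Real.pi_pos]
        · nlinarith [Real.pi_pos, hx, h]
      rw [Real.sin_neg] at h0; linarith
  rw [h1]
  have := Real.mul_le_sin (x := π * |x|) (by have := abs_nonneg x; positivity)
    (by nlinarith [Real.pi_pos])
  calc 2 * |x| = 2 / π * (π * |x|) := by field_simp
    _ ≤ Real.sin (π * |x|) := this

/-- If `η` is irrational with finite irrationality measure `ν`
(encoded by `|η - p/k| ≥ 1/k^ν` for all sufficiently large positive integers `k`),
then there exist `C > 0` and `K ∈ ℕ` such that for all integers `k` with `|k| ≥ K`,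
`1/|e^{2πikη} - 1| ≤ C·|k|^(ν+1)`. -/
theorem stmt_2 (η ν : ℝ) (hη : Irrational η)
    (hmeas : ∃ K₀ : ℕ, ∀ k : ℕ, K₀ ≤ k → ∀ p : ℤ,
      1 / (k : ℝ) ^ ν ≤ |η - (p : ℝ) / (k : ℝ)|) :
    ∃ C : ℝ, 0 < C ∧ ∃ K : ℕ, ∀ k : ℤ, (K : ℝ) ≤ |(k : ℝ)| →
      1 / ‖Complex.exp (2 * (Real.pi : ℂ) * Complex.I * (k : ℂ) * (η : ℂ)) - 1‖ ≤
        C * |(k : ℝ)| ^ (ν + 1) := by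
  obtain ⟨K₀, hK₀⟩ := hmeas
  refine ⟨1, one_pos, max K₀ 1, fun k hk => ?_⟩
  set n : ℕ := k.natAbs with hn
  have hnk : |(k : ℝ)| = (n : ℝ) := by
    rw [hn]; push_cast [Nat.cast_natAbs]; simp
  have hnK₀ : K₀ ≤ n := by
    have : ((max K₀ 1 : ℕ) : ℝ) ≤ (n : ℝ) := hnk ▸ hk
    exact_mod_cast le_trans (by exact_mod_cast le_max_left K₀ 1 : ((K₀ : ℕ) : ℝ) ≤ _) this
  have hn1 : 1 ≤ n := by
    have : ((max K₀ 1 : ℕ) : ℝ) ≤ (n : ℝ) := hnk ▸ hk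
    exact_mod_cast le_trans (by exact_mod_cast le_max_right K₀ 1 : ((1 : ℕ) : ℝ) ≤ _) this
  have hnpos : (0 : ℝ) < n := by exact_mod_cast hn1
  have harg : (2 : ℂ) * (Real.pi : ℂ) * Complex.I * (k : ℂ) * (η : ℂ)
      = ((2 * π * k * η : ℝ) : ℂ) * Complex.I := by push_cast; ring
  rw [harg, aux_abs_exp_sub_one, show (2 * π * (k : ℝ) * η) / 2 = π * ((k : ℝ) * η) by ring]
  set p : ℤ := round ((n : ℝ) * η) with hp
  set x : ℝ := (n : ℝ) * η - p with hx
  have hxle : |x| ≤ 1 / 2 := abs_sub_round _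
  have hlb : ((n : ℝ)) ^ (1 - ν) ≤ |x| := by
    have h := hK₀ n hnK₀ p
    have heq : (n : ℝ) * |η - (p : ℝ) / n| = |x| := by
      rw [← abs_of_pos hnpos, ← abs_mul]
      congr 1
      field_simp [hx]
      rw [abs_of_pos hnpos, hx]; ring
    calc ((n : ℝ)) ^ (1 - ν) = (n : ℝ) * (1 / (n : ℝ) ^ ν) := by
          rw [Real.rpow_sub hnpos, Real.rpow_one]; field_simp
      _ ≤ (n : ℝ) * |η - (p : ℝ) / n| := mul_le_mul_of_nonneg_left h hnpos.le
      _ = |x| := heq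
  have hsin : |Real.sin (π * ((k : ℝ) * η))| = |Real.sin (π * x)| := by
    have h1 : |Real.sin (π * ((k : ℝ) * η))| = |Real.sin (π * ((n : ℝ) * η))| := by
      rcases (abs_eq (by positivity : (0 : ℝ) ≤ (n : ℝ))).mp hnk with hc | hc
      · rw [hc]
      · rw [hc, show π * (-(n : ℝ) * η) = -(π * ((n : ℝ) * η)) by ring, Real.sin_neg, abs_neg]
    have h2 : |((-1 : ℝ)) ^ p| = 1 := by
      rcases Int.even_or_odd p with he | ho
      · rw [he.neg_one_zpow]; simp
      · rw [ho.neg_one_zpow]; simp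
    rw [h1, show π * ((n : ℝ) * η) = π * x + p * π by rw [hx]; ring,
      Real.sin_add_int_mul_pi, abs_mul, h2, one_mul]
  rw [hsin]
  have hsinlb : 2 * ((n : ℝ)) ^ (1 - ν) ≤ |Real.sin (π * x)| := by
    have := aux_sin_lb hxle; linarith
  have hpow0 : (0 : ℝ) < ((n : ℝ)) ^ (1 - ν) := Real.rpow_pos_of_pos hnpos _
  rw [div_le_iff₀ (by linarith)]
  have hmul : ((n : ℝ)) ^ (1 - ν) * ((n : ℝ)) ^ (ν + 1) = (n : ℝ) ^ (2 : ℝ) := by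
    rw [← Real.rpow_add hnpos, show (1 - ν) + (ν + 1) = (2 : ℝ) by ring]
  have h1 : (1 : ℝ) ≤ (n : ℝ) ^ (2 : ℝ) := Real.one_le_rpow (by exact_mod_cast hn1) (by norm_num)
  have hpow : (0 : ℝ) ≤ ((n : ℝ)) ^ (ν + 1) := (Real.rpow_pos_of_pos hnpos _).le
  calc (1 : ℝ) ≤ 4 * ((n : ℝ)) ^ (1 - ν) * ((n : ℝ)) ^ (ν + 1) := by nlinarith
    _ ≤ 2 * |Real.sin (π * x)| * ((n : ℝ)) ^ (ν + 1) := by nlinarith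
    _ = 1 * |(k : ℝ)| ^ (ν + 1) * (2 * |Real.sin (π * x)|) := by rw [hnk]; ring
end

section
/- Let η be a Liouville number and let (k_s)_{s≥1} be a strictly increasing sequence of positive integers with |η - p_s/k_s| < 1/k_s^s for some integers p_s. Define the sequence w_l = 1/k_s^{s-1} if l = k_s for some s, and w_l = 0 otherwise, for l ≥ 1. Then (w_l) has rapid decay, but the sequence v defined by v_{k_s} = w_{k_s}/(e^{πik_sη} - e^{-πik_sη}) satisfies |v_{k_s}| ≥ 1/(2π) for all s; in particular (v_k) does not tend to 0 and hence is not of rapid decay. -/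
lemma denom_eq_aux (x : ℝ) : Complex.exp ((x:ℂ) * Complex.I) - Complex.exp (-((x:ℂ)*Complex.I)) = 2 * Complex.I * Complex.sin x := by
  rw [Complex.sin]
  field_simp
  ring_nf
  simp [Complex.I_sq]
  ring

/-- Let `η` be a Liouville number and `(k_s)_{s≥1}` a strictly increasing
sequence of integers `> 1` with `|η - p_s/k_s| < 1/k_s^s`. Define `w_l = 1/k_s^{s-1}`
if `l = k_s` for some `s ≥ 1` and `w_l = 0` otherwise. Then `(w_l)` has rapid decay,
but `v_s := w_{k_s}/(e^{πik_sη} - e^{-πik_sη})` satisfies `|v_s| ≥ 1/(2π)` for all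
`s ≥ 1`; in particular `(v_s)` does not tend to `0`. -/

theorem stmt_7 (η : ℝ) (hη : Liouville η)
    (k : ℕ → ℕ) (p : ℕ → ℤ) (hmono : StrictMono k) (hk1 : ∀ s, 1 < k s)
    (happrox : ∀ s : ℕ, 1 ≤ s → |η - (p s : ℝ) / (k s : ℝ)| < 1 / (k s : ℝ) ^ s)
    (w : ℕ → ℂ)
    (hwdef : ∀ s : ℕ, 1 ≤ s → w (k s) = ((1 / (k s : ℝ) ^ ((s : ℝ) - 1) : ℝ) : ℂ))
    (hw0 : ∀ l : ℕ, (∀ s : ℕ, 1 ≤ s → k s ≠ l) → w l = 0)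
    (v : ℕ → ℂ)
    (hvdef : ∀ s : ℕ, v s = w (k s) /
      (Complex.exp ((Real.pi : ℂ) * Complex.I * (k s : ℂ) * (η : ℂ)) -
        Complex.exp (-((Real.pi : ℂ) * Complex.I * (k s : ℂ) * (η : ℂ))))) :
    (∀ q : ℕ, ∃ C : ℝ, ∀ l : ℕ, 1 ≤ l → ‖w l‖ ≤ C / (l : ℝ) ^ q) ∧
    (∀ s : ℕ, 1 ≤ s → 1 / (2 * Real.pi) ≤ ‖v s‖) ∧
    ¬ Filter.Tendsto v Filter.atTop (nhds 0) := by
  have hkpos : ∀ s, (0:ℝ) < (k s : ℝ) := fun s => by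
    exact_mod_cast Nat.lt_of_lt_of_le Nat.zero_lt_one (hk1 s).le
  have hk1' : ∀ s, (1:ℝ) ≤ (k s : ℝ) := fun s => by exact_mod_cast (hk1 s).le
  have habs : ∀ s : ℕ, 1 ≤ s → ‖w (k s)‖ = 1 / (k s : ℝ) ^ (s - 1) := by
    intro s hs
    rw [hwdef s hs, Complex.norm_real, Real.norm_eq_abs, abs_of_nonneg (by positivity)]
    congr 1
    rw [show ((s:ℝ) - 1) = ((s - 1 : ℕ) : ℝ) by push_cast [Nat.cast_sub hs]; ring,
      Real.rpow_natCast]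
  have part2 : ∀ s : ℕ, 1 ≤ s → 1 / (2 * Real.pi) ≤ ‖v s‖ := by
    intro s hs
    have hx : True := trivial
    set x : ℝ := Real.pi * (k s) * η with hxdef
    have hdenom : Complex.exp ((Real.pi : ℂ) * Complex.I * (k s : ℂ) * (η : ℂ)) -
        Complex.exp (-((Real.pi : ℂ) * Complex.I * (k s : ℂ) * (η : ℂ)))
        = 2 * Complex.I * Complex.sin (x : ℂ) := by
      rw [← denom_eq_aux x]
      norm_num [hxdef]
      push_cast
      ring_nf
    have habsd : ‖(Complex.exp ((Real.pi : ℂ) * Complex.I * (k s : ℂ) * (η : ℂ)) -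
        Complex.exp (-((Real.pi : ℂ) * Complex.I * (k s : ℂ) * (η : ℂ))))‖ = 2 * |Real.sin x| := by
      rw [hdenom, ← Complex.ofReal_sin, norm_mul, norm_mul, Complex.norm_two, Complex.norm_I,
        Complex.norm_real, Real.norm_eq_abs, mul_one]
    have hirr : Irrational ((k s : ℝ) * η) :=
      (hη.irrational).natCast_mul (Nat.lt_of_lt_of_le Nat.zero_lt_one (hk1 s).le).ne'
    have hsne : Real.sin x ≠ 0 := by
      intro h
      obtain ⟨n, hn⟩ := Real.sin_eq_zero_iff.mp h
      apply hirr.ne_int n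
      have h' : (n : ℝ) * Real.pi = Real.pi * ((k s : ℝ) * η) := hn.trans (by rw [hxdef]; ring)
      have h'' : Real.pi * ((k s : ℝ) * η) = Real.pi * (n : ℝ) := by linarith
      exact mul_left_cancel₀ Real.pi_ne_zero h''
    have hbound : |Real.sin x| < Real.pi / (k s : ℝ) ^ (s - 1) := by
      have h1 : Real.sin (Real.pi * ((k s : ℝ) * η - (p s : ℝ)) + (p s : ℝ) * Real.pi)
          = (-1 : ℝ) ^ (p s) * Real.sin (Real.pi * ((k s : ℝ) * η - (p s : ℝ))) :=
        Real.sin_add_int_mul_pi _ _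
      have h2 : |Real.sin x| = |Real.sin (Real.pi * ((k s : ℝ) * η - (p s : ℝ)))| := by
        rw [show x = Real.pi * ((k s : ℝ) * η - (p s : ℝ)) + (p s : ℝ) * Real.pi by
          rw [hxdef]; ring, h1, abs_mul]
        have : |(-1 : ℝ) ^ (p s)| = 1 := by
          rcases Int.even_or_odd (p s) with he | ho
          · rw [he.neg_one_zpow, abs_one]
          · rw [ho.neg_one_zpow, abs_neg, abs_one]
        rw [this, one_mul]
      rw [h2]
      have hk := hkpos s
      have hkne : (k s : ℝ) ≠ 0 := hk.ne'
      have h3 : |(k s : ℝ) * η - (p s : ℝ)| = (k s : ℝ) * |η - (p s : ℝ) / (k s : ℝ)| := by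
        rw [← abs_of_pos hk, ← abs_mul]
        congr 1
        field_simp
        rw [abs_of_pos hk]
        ring
      have h4 := happrox s hs
      have h5 : (k s : ℝ) * |η - (p s : ℝ) / (k s : ℝ)| < (k s : ℝ) * (1 / (k s : ℝ) ^ s) :=
        (mul_lt_mul_iff_right₀ hk).mpr h4
      have h6 : (k s : ℝ) * (1 / (k s : ℝ) ^ s) = 1 / (k s : ℝ) ^ (s - 1) := by
        rw [mul_one_div, div_eq_div_iff (by positivity) (by positivity), one_mul, ← pow_succ',
          Nat.sub_add_cancel hs]
      rw [h6] at h5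
      calc |Real.sin (Real.pi * ((k s : ℝ) * η - (p s : ℝ)))|
          ≤ |Real.pi * ((k s : ℝ) * η - (p s : ℝ))| := Real.abs_sin_le_abs
        _ = Real.pi * |(k s : ℝ) * η - (p s : ℝ)| := by
            rw [abs_mul, abs_of_pos Real.pi_pos]
        _ < Real.pi / (k s : ℝ) ^ (s - 1) := by
            rw [h3]
            have := (mul_lt_mul_iff_right₀ Real.pi_pos).mpr h5
            calc Real.pi * ((k s : ℝ) * |η - (p s : ℝ) / (k s : ℝ)|)
                < Real.pi * (1 / (k s : ℝ) ^ (s - 1)) := this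
              _ = Real.pi / (k s : ℝ) ^ (s - 1) := by ring
    have hspos : 0 < |Real.sin x| := abs_pos.mpr hsne
    rw [hvdef s, norm_div, habsd, habs s hs]
    have hkp : (0:ℝ) < (k s : ℝ) ^ (s - 1) := pow_pos (hkpos s) _
    rw [div_le_div_iff₀ (by positivity) (by linarith : (0:ℝ) < 2 * |Real.sin x|)]
    have heq : 1 / (k s : ℝ) ^ (s - 1) * (2 * Real.pi) = 2 * (Real.pi / (k s : ℝ) ^ (s - 1)) := by
      rw [div_mul_eq_mul_div, one_mul, mul_comm 2 Real.pi, mul_div_assoc]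
      ring
    rw [heq]
    linarith
  refine ⟨?_, part2, ?_⟩
  · intro q
    refine ⟨max 1 ((k q : ℝ) ^ q), fun l hl => ?_⟩
    have hlp : (0:ℝ) < (l:ℝ) ^ q := by positivity
    have hC1 : (1:ℝ) ≤ max 1 ((k q : ℝ) ^ q) := le_max_left _ _
    by_cases h : ∃ s : ℕ, 1 ≤ s ∧ k s = l
    · obtain ⟨s, hs, rfl⟩ := h
      rw [habs s hs, div_le_div_iff₀ (by positivity) hlp]
      have hone : (1:ℝ) ≤ (k s : ℝ) ^ (s - 1) := one_le_pow₀ (hk1' s)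
      rcases le_or_gt s q with hsq | hsq
      · have h1 : ((k s : ℝ)) ^ q ≤ ((k q : ℝ)) ^ q := by
          apply pow_le_pow_left₀ (by positivity)
          exact_mod_cast (hmono.le_iff_le).mpr hsq
        have h2 : ((k q : ℝ)) ^ q ≤ max 1 ((k q : ℝ) ^ q) := le_max_right _ _
        nlinarith
      · have hq : q ≤ s - 1 := by omega
        have h1 : ((k s : ℝ)) ^ q ≤ ((k s : ℝ)) ^ (s-1) := pow_le_pow_right₀ (hk1' s) hq
        nlinarith
    · push_neg at h
      rw [hw0 l h, norm_zero]
      exact div_nonneg (by linarith) hlp.le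
  · intro hT
    have h1 : Filter.Tendsto (fun s => ‖v s‖) Filter.atTop (nhds 0) := by
      simpa using hT.norm
    have h2 := h1.eventually_lt_const (show (0:ℝ) < 1 / (2 * Real.pi) by positivity)
    obtain ⟨s, hs1, hs2⟩ := (h2.and (Filter.eventually_ge_atTop 1)).exists
    exact absurd (part2 s hs2) (not_le.mpr (by simpa using hs1))
end

section
/- Let p be a nonzero integer and suppose a sequence (v_k)_{k∈ℤ} of complex numbers satisfies δ_{0k} = e^{-iθ_k}v_k - e^{iθ_k}v_{k-p} for all k ∈ ℤ, where θ_k = π(kη + p/η) and η is irrational. Then |v_{kp}| = |v_0| for all k ≥ 0 and |v_{kp}| = |v_{-p}| for all k ≤ -1; consequently, if v_0 ≠ 0 or v_{-p} ≠ 0, the sequence (v_k) does not converge to 0. -/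
/-- Let `p ≠ 0` be an integer, `η` irrational, `θ_k = π(kη + p/η)`, and
suppose `(v_k)` satisfies `δ_{0k} = e^{-iθ_k}v_k - e^{iθ_k}v_{k-p}` for all `k ∈ ℤ`.
Then `|v_{kp}| = |v_0|` for all `k ≥ 0` and `|v_{kp}| = |v_{-p}|` for all `k ≤ -1`;
consequently if `v_0 ≠ 0` or `v_{-p} ≠ 0` the sequence `(v_k)` does not converge
to `0`. -/
theorem stmt_9 (η : ℝ) (hη : Irrational η) (p : ℤ) (hp : p ≠ 0) (v : ℤ → ℂ)
    (hrec : ∀ k : ℤ, (if k = 0 then (1 : ℂ) else 0) =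
      Complex.exp (-(Complex.I * ((Real.pi * ((k : ℝ) * η + (p : ℝ) / η) : ℝ) : ℂ))) * v k -
        Complex.exp (Complex.I * ((Real.pi * ((k : ℝ) * η + (p : ℝ) / η) : ℝ) : ℂ)) *
          v (k - p)) :
    (∀ k : ℤ, 0 ≤ k → ‖v (k * p)‖ = ‖v 0‖) ∧
    (∀ k : ℤ, k ≤ -1 → ‖v (k * p)‖ = ‖v (-p)‖) ∧
    ((v 0 ≠ 0 ∨ v (-p) ≠ 0) → ¬ Filter.Tendsto v Filter.cofinite (nhds 0)) := by
  have key : ∀ k : ℤ, k ≠ 0 → ‖v k‖ = ‖v (k - p)‖ := by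
    intro k hk
    have h := hrec k
    rw [if_neg hk] at h
    have h2 : Complex.exp (-(Complex.I * ((Real.pi * ((k : ℝ) * η + (p : ℝ) / η) : ℝ) : ℂ))) * v k
        = Complex.exp (Complex.I * ((Real.pi * ((k : ℝ) * η + (p : ℝ) / η) : ℝ) : ℂ)) * v (k - p) := by
      linear_combination -h
    have h3 := congrArg (‖·‖) h2
    simpa [norm_mul, Complex.norm_exp, Complex.mul_re, Complex.I_re, Complex.I_im,
      Complex.ofReal_re, Complex.ofReal_im] using h3
  have pos : ∀ n : ℕ, ‖v ((n : ℤ) * p)‖ = ‖v 0‖ := by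
    intro n
    induction n with
    | zero => simp
    | succ m ih =>
        have hne : ((m + 1 : ℕ) : ℤ) * p ≠ 0 := by
          exact mul_ne_zero (by exact_mod_cast Nat.succ_ne_zero m) hp
        have := key _ hne
        rw [this]
        have : ((m + 1 : ℕ) : ℤ) * p - p = (m : ℤ) * p := by push_cast; ring
        rw [this, ih]
  have neg : ∀ n : ℕ, ‖v ((-1 - (n : ℤ)) * p)‖ = ‖v (-p)‖ := by
    intro n
    induction n with
    | zero => norm_num
    | succ m ih =>
        have hne : (-1 - ((m : ℤ))) * p ≠ 0 := by
          refine mul_ne_zero (by omega) hp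
        have h1 := key _ hne
        have h2 : (-1 - (m : ℤ)) * p - p = (-1 - ((m + 1 : ℕ) : ℤ)) * p := by push_cast; ring
        rw [h2] at h1
        rw [← h1, ih]
  refine ⟨?_, ?_, ?_⟩
  · intro k hk
    obtain ⟨n, rfl⟩ : ∃ n : ℕ, (n : ℤ) = k := ⟨k.toNat, Int.toNat_of_nonneg hk⟩
    exact pos n
  · intro k hk
    obtain ⟨n, rfl⟩ : ∃ n : ℕ, (-1 - (n : ℤ)) = k :=
      ⟨(-1 - k).toNat, by omega⟩
    exact neg n
  · rintro (h0 | h0) ht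
    · have hc : 0 < ‖v 0‖ := by simpa using h0
      have hfin := (Metric.tendsto_nhds.mp ht) _ hc
      rw [Filter.eventually_cofinite] at hfin
      have hsub : Set.range (fun n : ℕ => (n : ℤ) * p) ⊆
          {x : ℤ | ¬ dist (v x) 0 < ‖v 0‖} := by
        rintro _ ⟨n, rfl⟩
        simp only [Set.mem_setOf_eq, Complex.dist_eq, sub_zero, not_lt]
        exact le_of_eq (pos n).symm
      have hinj : Function.Injective (fun n : ℕ => (n : ℤ) * p) := by
        intro a b hab
        simp only at hab
        exact_mod_cast mul_right_cancel₀ hp hab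
      exact (Set.infinite_range_of_injective hinj) (hfin.subset hsub)
    · have hc : 0 < ‖v (-p)‖ := by simpa using h0
      have hfin := (Metric.tendsto_nhds.mp ht) _ hc
      rw [Filter.eventually_cofinite] at hfin
      have hsub : Set.range (fun n : ℕ => (-1 - (n : ℤ)) * p) ⊆
          {x : ℤ | ¬ dist (v x) 0 < ‖v (-p)‖} := by
        rintro _ ⟨n, rfl⟩
        simp only [Set.mem_setOf_eq, Complex.dist_eq, sub_zero, not_lt]
        exact le_of_eq (neg n).symm
      have hinj : Function.Injective (fun n : ℕ => (-1 - (n : ℤ)) * p) := by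
        intro a b hab
        simp only at hab
        have := mul_right_cancel₀ hp hab
        omega
      exact (Set.infinite_range_of_injective hinj) (hfin.subset hsub)
end
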